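/- Define Ĵ(z) = √( (1/(1 + √π z e^{z²} erfc(−z))) · (1/(1 + √π z e^{z²} erfc(−z)) + 2) ) for z ∈ ℝ. Then Ĵ(z) > 0 for all z, Ĵ is strictly decreasing, Ĵ(z) ~ 2z² as z → −∞, and Ĵ(z) ~ 1/√(√π z e^{z²}) as z → ∞. -/

import Mathlib

open Filter

noncomputable def erfc (x : ℝ) : ℝ :=
  (2 / Real.sqrt Real.pi) * ∫ u in Set.Ioi x, Real.exp (-u^2)

noncomputable def Jhat (z : ℝ) : ℝ :=
  Real.sqrt ((1 / (1 + Real.sqrt Real.pi * z * Real.exp (z^2) * erfc (-z)))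
    * (1 / (1 + Real.sqrt Real.pi * z * Real.exp (z^2) * erfc (-z)) + 2))

section aux


lemma integrable_gauss : MeasureTheory.Integrable (fun w : ℝ => Real.exp (-w^2)) := by
  have := integrable_exp_neg_mul_sq (one_pos)
  simpa using this

lemma integrable_mul_gauss : MeasureTheory.Integrable (fun w : ℝ => w * Real.exp (-w^2)) := by
  have := integrable_mul_exp_neg_mul_sq (one_pos)
  simpa using this

lemma integrable_main (z : ℝ) :
    MeasureTheory.Integrable (fun v : ℝ => 2 * v * Real.exp (2*v*z - v^2)) := by
  have hg : MeasureTheory.Integrable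
      (fun w : ℝ => Real.exp (z^2) * ((2*w + 2*z) * Real.exp (-w^2))) := by
    apply MeasureTheory.Integrable.const_mul
    have h1 : MeasureTheory.Integrable (fun w : ℝ => 2*w * Real.exp (-w^2)) :=
      (integrable_mul_gauss.const_mul 2).congr (by filter_upwards with w; ring)
    have h2 : MeasureTheory.Integrable (fun w : ℝ => 2*z * Real.exp (-w^2)) :=
      integrable_gauss.const_mul (2*z)
    exact (h1.add h2).congr (by filter_upwards with w; simp; ring)
  have := hg.comp_sub_right z
  apply this.congr
  filter_upwards with v
  show Real.exp (z^2) * ((2*(v - z) + 2*z) * Real.exp (-(v - z)^2)) = _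
  rw [mul_comm (Real.exp (z^2)), mul_assoc, ← Real.exp_add]
  ring_nf

noncomputable def Fz (z : ℝ) : ℝ := ∫ v in Set.Ioi (0:ℝ), 2 * v * Real.exp (2*v*z - v^2)

lemma setIntegral_Ioi_comp_sub (g : ℝ → ℝ) (a c : ℝ) :
    ∫ v in Set.Ioi a, g (v - c) = ∫ w in Set.Ioi (a - c), g w := by
  rw [← MeasureTheory.integral_indicator measurableSet_Ioi,
    ← MeasureTheory.integral_indicator measurableSet_Ioi,
    ← MeasureTheory.integral_sub_right_eq_self ((Set.Ioi (a - c)).indicator g) c]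
  congr 1
  ext x
  by_cases h : a < x <;>
    simp [Set.indicator_apply, Set.mem_Ioi, h, sub_lt_sub_iff_right, lt_sub_iff_add_lt,
      sub_lt_iff_lt_add]

lemma integral_two_mul_gauss (a : ℝ) :
    ∫ w in Set.Ioi a, 2 * w * Real.exp (-w^2) = Real.exp (-a^2) := by
  have h : ∀ x ∈ Set.Ioi a, HasDerivAt (fun w => -Real.exp (-w^2))
      (2 * x * Real.exp (-x^2)) x := by
    intro x _
    have : HasDerivAt (fun w : ℝ => -w^2) (-(2*x)) x := by
      exact ((hasDerivAt_pow 2 x).neg).congr_deriv (by norm_num)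
    have := (this.exp).neg
    exact this.congr_deriv (by ring)
  have hint : MeasureTheory.IntegrableOn (fun w => 2 * w * Real.exp (-w^2)) (Set.Ioi a) :=
    ((integrable_mul_gauss.const_mul 2).congr
      (by filter_upwards with w; ring)).integrableOn
  have htend : Filter.Tendsto (fun w => -Real.exp (-w^2)) Filter.atTop (nhds 0) := by
    rw [← neg_zero]
    apply Filter.Tendsto.neg
    apply Real.tendsto_exp_atBot.comp
    apply Filter.tendsto_neg_atBot_iff.mpr
    exact Filter.tendsto_pow_atTop (by norm_num)
  have := MeasureTheory.integral_Ioi_of_hasDerivAt_of_tendsto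
    (Continuous.continuousWithinAt (by continuity)) h hint htend
  rw [this]; ring

lemma Fz_eq (z : ℝ) :
    Fz z = 1 + Real.sqrt Real.pi * z * Real.exp (z^2) * erfc (-z) := by
  have hrw : ∀ v : ℝ, 2 * v * Real.exp (2*v*z - v^2)
      = (fun w => Real.exp (z^2) * ((2*w + 2*z) * Real.exp (-w^2))) (v - z) := by
    intro v
    show _ = Real.exp (z^2) * ((2*(v - z) + 2*z) * Real.exp (-(v - z)^2))
    rw [show (2*v*z - v^2) = (z^2) + (-(v - z)^2) by ring, Real.exp_add]
    ring
  have h1 : Fz z = ∫ w in Set.Ioi (0 - z),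
      Real.exp (z^2) * ((2*w + 2*z) * Real.exp (-w^2)) := by
    rw [Fz, ← setIntegral_Ioi_comp_sub (fun w => Real.exp (z^2) * ((2*w + 2*z) * Real.exp (-w^2))) 0 z]
    exact MeasureTheory.setIntegral_congr_fun measurableSet_Ioi (fun v _ => hrw v)
  have hi1 : MeasureTheory.IntegrableOn (fun w => 2 * w * Real.exp (-w^2)) (Set.Ioi (0 - z)) :=
    ((integrable_mul_gauss.const_mul 2).congr
      (by filter_upwards with w; ring)).integrableOn
  have hi2 : MeasureTheory.IntegrableOn (fun w => 2 * z * Real.exp (-w^2)) (Set.Ioi (0 - z)) :=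
    (integrable_gauss.const_mul (2*z)).integrableOn
  rw [h1, MeasureTheory.integral_const_mul]
  have hsplit : ∫ w in Set.Ioi (0 - z), (2*w + 2*z) * Real.exp (-w^2)
      = (∫ w in Set.Ioi (0 - z), 2 * w * Real.exp (-w^2))
        + ∫ w in Set.Ioi (0 - z), 2 * z * Real.exp (-w^2) := by
    rw [← MeasureTheory.integral_add hi1 hi2]
    exact MeasureTheory.setIntegral_congr_fun measurableSet_Ioi (fun v _ => by ring)
  rw [hsplit, integral_two_mul_gauss, MeasureTheory.integral_const_mul]
  have herfc : ∫ w in Set.Ioi (-z), Real.exp (-w^2) = Real.sqrt Real.pi / 2 * erfc (-z) := by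
    rw [erfc]
    have hpi : Real.sqrt Real.pi ≠ 0 := by
      positivity
    field_simp
  rw [zero_sub, herfc]
  rw [mul_add, ← Real.exp_add]
  have : z ^ 2 + -(-z)^2 = 0 := by ring
  rw [this, Real.exp_zero]
  ring

lemma setIntegral_pos_aux {f : ℝ → ℝ} (hf : ∀ v ∈ Set.Ioi (0:ℝ), 0 < f v)
    (hint : MeasureTheory.IntegrableOn f (Set.Ioi (0:ℝ))) :
    0 < ∫ v in Set.Ioi (0:ℝ), f v := by
  have hae : 0 ≤ᵐ[MeasureTheory.volume.restrict (Set.Ioi (0:ℝ))] f := by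
    filter_upwards [MeasureTheory.ae_restrict_mem measurableSet_Ioi] with v hv
    exact (hf v hv).le
  rw [MeasureTheory.setIntegral_pos_iff_support_of_nonneg_ae hae hint]
  have hsub : Set.Ioi (0:ℝ) ⊆ Function.support f ∩ Set.Ioi 0 :=
    fun v hv => ⟨(hf v hv).ne', hv⟩
  calc (0:ENNReal) < MeasureTheory.volume (Set.Ioi (0:ℝ)) := by simp
    _ ≤ _ := MeasureTheory.measure_mono hsub

lemma Fz_pos (z : ℝ) : 0 < Fz z := by
  apply setIntegral_pos_aux
  · intro v hv
    have : (0:ℝ) < v := hv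
    positivity
  · exact (integrable_main z).integrableOn

lemma Fz_strictMono : StrictMono Fz := by
  intro a b hab
  rw [← sub_pos, Fz, Fz, ← MeasureTheory.integral_sub (integrable_main b).integrableOn
    (integrable_main a).integrableOn]
  apply setIntegral_pos_aux
  · intro v hv
    have hv' : (0:ℝ) < v := hv
    have : Real.exp (2*v*a - v^2) < Real.exp (2*v*b - v^2) := by
      apply Real.exp_lt_exp.mpr
      nlinarith
    nlinarith
  · exact ((integrable_main b).sub (integrable_main a)).integrableOn

noncomputable def Pz (z : ℝ) : ℝ := 1 + Real.sqrt Real.pi * z * Real.exp (z^2) * erfc (-z)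

lemma Pz_pos (z : ℝ) : 0 < Pz z := by rw [Pz, ← Fz_eq]; exact Fz_pos z

lemma Pz_strictMono : StrictMono Pz := by
  intro a b hab
  rw [Pz, Pz, ← Fz_eq, ← Fz_eq]
  exact Fz_strictMono hab




lemma Jhat_eq (z : ℝ) : Jhat z = Real.sqrt ((1 / Pz z) * (1 / Pz z + 2)) := rfl

lemma Jhat_pos (z : ℝ) : 0 < Jhat z := by
  rw [Jhat_eq]
  have h := Pz_pos z
  have h1 : 0 < 1 / Pz z := by positivity
  apply Real.sqrt_pos.mpr
  nlinarith

lemma Jhat_strictAnti : StrictAnti Jhat := by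
  intro a b hab
  rw [Jhat_eq, Jhat_eq]
  have ha := Pz_pos a
  have hb := Pz_pos b
  have hlt : 1 / Pz b < 1 / Pz a := by
    apply one_div_lt_one_div_of_lt ha (Pz_strictMono hab)
  have h1 : 0 < 1 / Pz b := by positivity
  apply Real.sqrt_lt_sqrt (by nlinarith)
  nlinarith

lemma key_neg {z : ℝ} (hz : z < 0) :
    2 * z^2 * Fz z = ∫ t in Set.Ioi (0:ℝ), t * Real.exp (-t) * Real.exp (-t^2/(4*z^2)) := by
  have hb : (0:ℝ) < -2*z := by linarith
  have h := MeasureTheory.integral_comp_mul_left_Ioi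
    (fun t => t * Real.exp (-t) * Real.exp (-t^2/(4*z^2))) 0 hb
  rw [mul_zero] at h
  have hcong : ∀ x ∈ Set.Ioi (0:ℝ),
      (fun t => t * Real.exp (-t) * Real.exp (-t^2/(4*z^2))) ((-2*z) * x)
        = (-2*z) * (x * Real.exp (2*x*z - x^2)) := by
    intro x _
    simp only
    rw [mul_assoc, ← Real.exp_add]
    have hz0 : z ≠ 0 := ne_of_lt hz
    have hz2 : (4:ℝ) * z^2 ≠ 0 := by positivity
    have he : (-(-2 * z * x)) + (-(-2 * z * x)^2/(4*z^2)) = 2*x*z - x^2 := by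
      field_simp
      ring
    rw [he]
    ring
  rw [MeasureTheory.setIntegral_congr_fun measurableSet_Ioi hcong] at h
  rw [MeasureTheory.integral_const_mul] at h
  have hF2 : ∫ x in Set.Ioi (0:ℝ), x * Real.exp (2*x*z - x^2) = Fz z / 2 := by
    rw [Fz, show (fun v : ℝ => 2 * v * Real.exp (2*v*z - v^2))
      = (fun v : ℝ => 2 * (v * Real.exp (2*v*z - v^2))) by funext v; ring,
      MeasureTheory.integral_const_mul]
    ring
  rw [hF2] at h
  have hzne : -2 * z ≠ 0 := ne_of_gt hb
  rw [smul_eq_mul] at h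
  have hI : (∫ x in Set.Ioi (0:ℝ),
      (fun t => t * Real.exp (-t) * Real.exp (-t^2/(4*z^2))) x) = 2 * z^2 * Fz z := by
    have h2 := congrArg (fun r => (-2*z) * r) h
    rw [mul_inv_cancel_left₀ hzne] at h2
    rw [← h2]
    ring
  exact hI.symm

lemma integrableOn_texp : MeasureTheory.IntegrableOn
    (fun t : ℝ => t * Real.exp (-t)) (Set.Ioi (0:ℝ)) := by
  have := Real.GammaIntegral_convergent (by norm_num : (0:ℝ) < 2)
  apply this.congr_fun ?_ measurableSet_Ioi
  intro t ht
  simp only [show (2:ℝ) - 1 = 1 by norm_num, Real.rpow_one]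
  ring

lemma integral_texp : ∫ t in Set.Ioi (0:ℝ), t * Real.exp (-t) = 1 := by
  have h2 : Real.Gamma 2 = ∫ x in Set.Ioi (0:ℝ), Real.exp (-x) * x ^ ((2:ℝ) - 1) :=
    Real.Gamma_eq_integral (by norm_num)
  have hG : Real.Gamma 2 = 1 := by
    rw [show (2:ℝ) = 1 + 1 by norm_num, Real.Gamma_add_one one_ne_zero, Real.Gamma_one]
    ring
  rw [← hG, h2]
  apply MeasureTheory.setIntegral_congr_fun measurableSet_Ioi
  intro t ht
  simp only [show (2:ℝ) - 1 = 1 by norm_num, Real.rpow_one]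
  ring

lemma tendsto_2z2F : Filter.Tendsto (fun z => 2 * z^2 * Fz z) Filter.atBot (nhds 1) := by
  have key : Filter.Tendsto
      (fun z => ∫ t in Set.Ioi (0:ℝ), t * Real.exp (-t) * Real.exp (-t^2/(4*z^2)))
      Filter.atBot (nhds (∫ t in Set.Ioi (0:ℝ), t * Real.exp (-t))) := by
    apply MeasureTheory.tendsto_integral_filter_of_dominated_convergence
      (fun t => t * Real.exp (-t))
    · filter_upwards with z
      exact ((continuous_id.mul (Real.continuous_exp.comp continuous_neg)).mul
        (Real.continuous_exp.comp (((continuous_pow 2).neg).div_const _))).aestronglyMeasurable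
    · filter_upwards with z
      filter_upwards [MeasureTheory.ae_restrict_mem measurableSet_Ioi] with t ht
      have ht' : (0:ℝ) < t := ht
      have h1 : Real.exp (-t^2/(4*z^2)) ≤ 1 := by
        apply Real.exp_le_one_iff.mpr
        apply div_nonpos_of_nonpos_of_nonneg
        · nlinarith
        · positivity
      rw [Real.norm_eq_abs, abs_of_nonneg (by positivity)]
      nlinarith [Real.exp_pos (-t), mul_pos ht' (Real.exp_pos (-t))]
    · exact integrableOn_texp
    · filter_upwards [MeasureTheory.ae_restrict_mem measurableSet_Ioi] with t ht
      have hsq : Filter.Tendsto (fun z : ℝ => 4 * z^2) Filter.atBot Filter.atTop := by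
        apply Filter.Tendsto.const_mul_atTop (by norm_num : (0:ℝ) < 4)
        have hneg : Filter.Tendsto (fun z : ℝ => -z) Filter.atBot Filter.atTop :=
          tendsto_neg_atBot_atTop
        apply ((tendsto_pow_atTop two_ne_zero).comp hneg).congr
        intro x
        simp [neg_pow]
      have hdiv : Filter.Tendsto (fun z : ℝ => -t^2/(4*z^2)) Filter.atBot (nhds 0) := by
        rw [show (0:ℝ) = -t^2 * 0 by ring]
        simp only [div_eq_mul_inv]
        exact Filter.Tendsto.const_mul _ (tendsto_inv_atTop_zero.comp hsq)
      have hexp := (Real.continuous_exp.tendsto 0).comp hdiv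
      rw [Real.exp_zero] at hexp
      have hfin := (tendsto_const_nhds (x := t * Real.exp (-t))
        (f := Filter.atBot (α := ℝ))).mul hexp
      rw [mul_one] at hfin
      exact hfin
  rw [integral_texp] at key
  apply key.congr'
  filter_upwards [Filter.eventually_lt_atBot (0:ℝ)] with z hz
  exact (key_neg hz).symm

lemma sq_tendsto_atBot : Filter.Tendsto (fun z : ℝ => z^2) Filter.atBot Filter.atTop := by
  have hneg : Filter.Tendsto (fun z : ℝ => -z) Filter.atBot Filter.atTop :=
    tendsto_neg_atBot_atTop
  apply ((tendsto_pow_atTop two_ne_zero).comp hneg).congr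
  intro x
  simp [neg_pow]

lemma Pz_eq_Fz (z : ℝ) : Pz z = Fz z := (Fz_eq z).symm

lemma tendsto_Jhat_atBot :
    Filter.Tendsto (fun z => Jhat z / (2 * z^2)) Filter.atBot (nhds 1) := by
  have ha : Filter.Tendsto (fun z => (2 * z^2 * Fz z)⁻¹) Filter.atBot (nhds 1) := by
    have := tendsto_2z2F.inv₀ one_ne_zero
    simpa using this
  have hz2 : Filter.Tendsto (fun z : ℝ => (z^2)⁻¹) Filter.atBot (nhds 0) :=
    tendsto_inv_atTop_zero.comp sq_tendsto_atBot
  have hmain := (ha.mul (ha.add hz2)).sqrt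
  have h1 : Real.sqrt (1 * (1 + 0)) = 1 := by norm_num
  rw [h1] at hmain
  apply hmain.congr'
  filter_upwards [Filter.eventually_lt_atBot (0:ℝ)] with z hz
  have hF := Fz_pos z
  have hz0 : z ≠ 0 := ne_of_lt hz
  have hc : (0:ℝ) < 2 * z^2 := by positivity
  have hX : 0 ≤ (1 / Pz z) * (1 / Pz z + 2) := by
    have := Pz_pos z
    positivity
  rw [Jhat_eq, div_eq_mul_inv, ← Real.sqrt_sq (inv_nonneg.mpr hc.le),
    ← Real.sqrt_mul hX]
  congr 1
  rw [Pz_eq_Fz]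
  have hFne : Fz z ≠ 0 := ne_of_gt hF
  field_simp

lemma tendsto_Iic_gauss :
    Filter.Tendsto (fun a => ∫ u in Set.Iic a, Real.exp (-u^2)) Filter.atBot (nhds 0) := by
  apply tendsto_of_tendsto_of_tendsto_of_le_of_le' (g := fun _ : ℝ => (0:ℝ))
    (h := fun a : ℝ => Real.exp a) tendsto_const_nhds Real.tendsto_exp_atBot
  · filter_upwards with a
    apply MeasureTheory.setIntegral_nonneg measurableSet_Iic
    intro u _
    positivity
  · filter_upwards [Filter.eventually_le_atBot (-1:ℝ)] with a ha
    calc ∫ u in Set.Iic a, Real.exp (-u^2)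
        ≤ ∫ u in Set.Iic a, Real.exp u := by
          apply MeasureTheory.setIntegral_mono_on integrable_gauss.integrableOn
            (integrableOn_exp_Iic a) measurableSet_Iic
          intro u hu
          have hu' : u ≤ a := hu
          apply Real.exp_le_exp.mpr
          nlinarith
      _ = Real.exp a := integral_exp_Iic a

lemma erfc_neg_tendsto : Filter.Tendsto (fun z : ℝ => erfc (-z)) Filter.atTop (nhds 2) := by
  have htot : ∫ u : ℝ, Real.exp (-u^2) = Real.sqrt Real.pi := by
    have := integral_gaussian 1
    simp only [one_mul, div_one] at this
    rw [← this]
    congr 1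
    funext u
    norm_num
  have hsplit : ∀ a : ℝ, ∫ u in Set.Ioi a, Real.exp (-u^2)
      = Real.sqrt Real.pi - ∫ u in Set.Iic a, Real.exp (-u^2) := by
    intro a
    have h := intervalIntegral.integral_Iic_add_Ioi (μ := MeasureTheory.volume) (b := a)
      integrable_gauss.integrableOn integrable_gauss.integrableOn
    rw [htot] at h
    linarith
  have hIic : Filter.Tendsto (fun z : ℝ => ∫ u in Set.Iic (-z), Real.exp (-u^2))
      Filter.atTop (nhds 0) := tendsto_Iic_gauss.comp tendsto_neg_atTop_atBot
  have hπ : Real.sqrt Real.pi ≠ 0 := by positivity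
  have : Filter.Tendsto (fun z : ℝ => (2 / Real.sqrt Real.pi) *
      (Real.sqrt Real.pi - ∫ u in Set.Iic (-z), Real.exp (-u^2))) Filter.atTop
      (nhds ((2 / Real.sqrt Real.pi) * (Real.sqrt Real.pi - 0))) :=
    (tendsto_const_nhds.sub hIic).const_mul _
  rw [sub_zero, div_mul_cancel₀ 2 hπ] at this
  apply this.congr
  intro z
  rw [erfc, hsplit]

lemma A_tendsto :
    Filter.Tendsto (fun z : ℝ => Real.sqrt Real.pi * z * Real.exp (z^2))
      Filter.atTop Filter.atTop := by
  apply tendsto_atTop_mono' Filter.atTop ?_ tendsto_id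
  filter_upwards [Filter.eventually_ge_atTop (0:ℝ)] with z hz
  have h1 : 1 ≤ Real.sqrt Real.pi := Real.one_le_sqrt.mpr (by linarith [Real.pi_gt_three])
  have h2 : 1 ≤ Real.exp (z^2) := Real.one_le_exp (by positivity)
  have : (1:ℝ) * z * 1 ≤ Real.sqrt Real.pi * z * Real.exp (z^2) := by
    apply mul_le_mul (by nlinarith) h2 (by norm_num) (by nlinarith)
  simpa using this

lemma Pz_tendsto_atTop : Filter.Tendsto Pz Filter.atTop Filter.atTop := by
  apply tendsto_atTop_mono' Filter.atTop ?_ A_tendsto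
  filter_upwards [erfc_neg_tendsto.eventually (eventually_ge_nhds (by norm_num : (1:ℝ) < 2)),
    Filter.eventually_ge_atTop (0:ℝ)] with z herfc hz
  have hA : 0 ≤ Real.sqrt Real.pi * z * Real.exp (z^2) := by positivity
  rw [Pz]
  nlinarith

lemma AP_tendsto : Filter.Tendsto
    (fun z => (Real.sqrt Real.pi * z * Real.exp (z^2)) / Pz z) Filter.atTop (nhds (1/2)) := by
  have h : Filter.Tendsto
      (fun z => ((Real.sqrt Real.pi * z * Real.exp (z^2))⁻¹ + erfc (-z)))
      Filter.atTop (nhds 2) := by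
    have hAinv := tendsto_inv_atTop_zero.comp A_tendsto
    have := hAinv.add erfc_neg_tendsto
    simpa using this
  have h2 := h.inv₀ (by norm_num)
  rw [show ((2:ℝ))⁻¹ = 1/2 by norm_num] at h2
  apply h2.congr'
  filter_upwards [Filter.eventually_gt_atTop (0:ℝ)] with z hz
  have hA : 0 < Real.sqrt Real.pi * z * Real.exp (z^2) := by positivity
  have hPz := Pz_pos z
  have h1 : (Real.sqrt Real.pi * z * Real.exp (z^2))⁻¹ + erfc (-z)
      = Pz z / (Real.sqrt Real.pi * z * Real.exp (z^2)) := by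
    rw [Pz]
    field_simp
  rw [h1, inv_div]

lemma tendsto_Jhat_atTop : Filter.Tendsto
    (fun z => Jhat z * Real.sqrt (Real.sqrt Real.pi * z * Real.exp (z^2)))
    Filter.atTop (nhds 1) := by
  have hu : Filter.Tendsto (fun z => 1 / Pz z) Filter.atTop (nhds 0) := by
    exact (tendsto_inv_atTop_zero.comp Pz_tendsto_atTop).congr (fun z => by simp [one_div])
  have hprod := (AP_tendsto.mul (hu.add (tendsto_const_nhds (x := (2:ℝ))))).sqrt
  have hval : Real.sqrt (1/2 * (0 + 2)) = 1 := by norm_num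
  rw [hval] at hprod
  apply hprod.congr'
  filter_upwards [Filter.eventually_gt_atTop (0:ℝ)] with z hz
  have hA : 0 < Real.sqrt Real.pi * z * Real.exp (z^2) := by positivity
  have hPz := Pz_pos z
  have hX : 0 ≤ (1 / Pz z) * (1 / Pz z + 2) := by positivity
  rw [Jhat_eq, ← Real.sqrt_mul hX]
  congr 1
  field_simp


end aux

theorem stmt_19 :
    (∀ z : ℝ, 0 < Jhat z)
    ∧ StrictAnti Jhat
    ∧ Tendsto (fun z => Jhat z / (2 * z^2)) atBot (nhds 1)
    ∧ Tendsto (fun z => Jhat z * Real.sqrt (Real.sqrt Real.pi * z * Real.exp (z^2))) atTop (nhds 1) :=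
  ⟨Jhat_pos, Jhat_strictAnti, tendsto_Jhat_atBot, tendsto_Jhat_atTop⟩
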